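/- Let K ≥ 3 and let F be a graph on n vertices that is a vertex-disjoint union of cycles covering all n vertices, such that at least n/2 vertices of F lie on cycles of length at least K. Then F has a subgraph F¹ whose number of edges satisfies n/2 ≤ e(F¹) ≤ n/2 + 2K and whose connected components are cycles of length at least K together with at most one path of length at least K. -/

import Mathlib

open scoped Classical

noncomputable section

/-- The degree of a vertex in a simple graph, via set cardinality. -/
def gDeg {n : ℕ} (G : SimpleGraph (Fin n)) (v : Fin n) : ℕ := {u : Fin n | G.Adj v u}.ncard

/-- The number of vertices in the connected component of `v`. -/
def compCard {n : ℕ} (G : SimpleGraph (Fin n)) (v : Fin n) : ℕ :=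
  {u : Fin n | G.Reachable v u}.ncard

/-- The number of edges in the connected component of `v`. -/
def compEdges {n : ℕ} (G : SimpleGraph (Fin n)) (v : Fin n) : ℕ :=
  {e ∈ G.edgeSet | ∃ u, u ∈ e ∧ G.Reachable v u}.ncard

namespace LongSub

variable {n : ℕ}

/-- `A` is closed under adjacency in `F`. -/
def ClosedSet (F : SimpleGraph (Fin n)) (A : Set (Fin n)) : Prop :=
  ∀ ⦃u w⦄, F.Adj u w → u ∈ A → w ∈ A

lemma reach_subset_of_closed {F : SimpleGraph (Fin n)} {A : Set (Fin n)}
    (hA : ClosedSet F A) {v u : Fin n} (hv : v ∈ A) (h : F.Reachable v u) : u ∈ A := by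
  suffices H : ∀ x u : Fin n, F.Walk x u → x ∈ A → u ∈ A from H v u h.some hv
  intro x u w
  induction w with
  | nil => exact id
  | cons hadj p ih => intro ha; exact ih (hA hadj ha)

lemma reachable_of_agree {F1 G : SimpleGraph (Fin n)} {B : Set (Fin n)}
    (hB : ClosedSet G B) (hagr : ∀ u w, u ∈ B → (F1.Adj u w ↔ G.Adj u w))
    {v u : Fin n} (hv : v ∈ B) (h : G.Reachable v u) : F1.Reachable v u := by
  suffices H : ∀ x u : Fin n, G.Walk x u → x ∈ B → F1.Reachable x u from H v u h.some hv
  intro x u w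
  induction w with
  | nil => exact fun _ => SimpleGraph.Reachable.refl _
  | @cons a b c hadj p ih =>
      intro ha
      exact ((hagr a b ha).mpr hadj).reachable.trans (ih (hB hadj ha))

lemma closed_of_agree {F1 G : SimpleGraph (Fin n)} {B : Set (Fin n)}
    (hB : ClosedSet G B) (hagr : ∀ u w, u ∈ B → (F1.Adj u w ↔ G.Adj u w)) :
    ClosedSet F1 B := fun u w h hu => hB ((hagr u w hu).mp h) hu

lemma reachSet_eq_of_agree {F1 G : SimpleGraph (Fin n)} {B : Set (Fin n)}
    (hB : ClosedSet G B) (hagr : ∀ u w, u ∈ B → (F1.Adj u w ↔ G.Adj u w))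
    {v : Fin n} (hv : v ∈ B) :
    {u : Fin n | F1.Reachable v u} = {u : Fin n | G.Reachable v u} := by
  ext u
  constructor
  · intro h
    exact reachable_of_agree (closed_of_agree hB hagr)
      (fun u w hu => (hagr u w hu).symm) hv h
  · intro h
    exact reachable_of_agree hB hagr hv h

/-- a set of size two containing two distinct elements is that pair -/
lemma pair_eq {α : Type*} {s : Set α} (h2 : s.ncard = 2) {a b : α}
    (ha : a ∈ s) (hb : b ∈ s) (hab : a ≠ b) : s = {a, b} := by
  obtain ⟨x, y, hxy, rfl⟩ := Set.ncard_eq_two.mp h2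
  simp only [Set.mem_insert_iff, Set.mem_singleton_iff] at ha hb
  rcases ha with rfl | rfl <;> rcases hb with rfl | rfl
  · exact absurd rfl hab
  · rfl
  · exact Set.pair_comm _ _
  · exact absurd rfl hab

lemma gDeg_eq_degree (G : SimpleGraph (Fin n)) (v : Fin n) : gDeg G v = G.degree v := by
  classical
  rw [SimpleGraph.degree, SimpleGraph.neighborFinset, gDeg]
  exact Set.ncard_eq_toFinset_card' _

lemma two_mul_edge_ncard (G : SimpleGraph (Fin n)) :
    2 * G.edgeSet.ncard = ∑ v, gDeg G v := by
  classical
  have h := SimpleGraph.sum_degrees_eq_twice_card_edges G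
  have h2 : G.edgeSet.ncard = G.edgeFinset.card := by
    rw [SimpleGraph.edgeFinset]; exact Set.ncard_eq_toFinset_card' _
  rw [h2, ← h]
  exact (Finset.sum_congr rfl (fun v _ => gDeg_eq_degree G v)).symm

section Restrict

/-- the restriction of `F` to a vertex set `A`. -/
def restrictG (F : SimpleGraph (Fin n)) (A : Set (Fin n)) : SimpleGraph (Fin n) where
  Adj u w := F.Adj u w ∧ u ∈ A ∧ w ∈ A
  symm := ⟨fun u w ⟨h, hu, hw⟩ => ⟨h.symm, hw, hu⟩⟩
  loopless := ⟨fun u h => F.irrefl h.1⟩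

lemma restrictG_le (F : SimpleGraph (Fin n)) (A : Set (Fin n)) : restrictG F A ≤ F :=
  fun _ _ h => h.1

lemma restrictG_adj {F : SimpleGraph (Fin n)} {A : Set (Fin n)} {u w : Fin n} :
    (restrictG F A).Adj u w ↔ F.Adj u w ∧ u ∈ A ∧ w ∈ A := Iff.rfl

lemma restrictG_nbhd_mem {F : SimpleGraph (Fin n)} {A : Set (Fin n)}
    (hA : ClosedSet F A) {v : Fin n} (hv : v ∈ A) :
    {u : Fin n | (restrictG F A).Adj v u} = {u : Fin n | F.Adj v u} := by
  ext u
  simp only [Set.mem_setOf_eq, restrictG_adj]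
  exact ⟨fun h => h.1, fun h => ⟨h, hv, hA h hv⟩⟩

lemma restrictG_nbhd_not_mem {F : SimpleGraph (Fin n)} {A : Set (Fin n)}
    {v : Fin n} (hv : v ∉ A) :
    {u : Fin n | (restrictG F A).Adj v u} = ∅ := by
  ext u; simp only [Set.mem_setOf_eq, restrictG_adj, Set.mem_empty_iff_false, iff_false]
  rintro ⟨-, hvA, -⟩; exact hv hvA

lemma gDeg_restrict_of_mem {F : SimpleGraph (Fin n)} (hreg : ∀ v, gDeg F v = 2)
    {A : Set (Fin n)} (hA : ClosedSet F A) {v : Fin n} (hv : v ∈ A) :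
    gDeg (restrictG F A) v = 2 := by
  rw [gDeg, restrictG_nbhd_mem hA hv]; exact hreg v

lemma gDeg_restrict_of_not_mem {F : SimpleGraph (Fin n)}
    {A : Set (Fin n)} {v : Fin n} (hv : v ∉ A) :
    gDeg (restrictG F A) v = 0 := by
  rw [gDeg, restrictG_nbhd_not_mem hv, Set.ncard_empty]

lemma restrictG_edge_ncard {F : SimpleGraph (Fin n)} (hreg : ∀ v, gDeg F v = 2)
    {A : Set (Fin n)} (hA : ClosedSet F A) :
    (restrictG F A).edgeSet.ncard = A.ncard := by
  classical
  have h := two_mul_edge_ncard (restrictG F A)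
  have hsum : ∑ v, gDeg (restrictG F A) v = 2 * A.ncard := by
    have hd : ∀ v : Fin n, gDeg (restrictG F A) v = if v ∈ A then 2 else 0 := by
      intro v
      by_cases hv : v ∈ A
      · rw [if_pos hv]; exact gDeg_restrict_of_mem hreg hA hv
      · rw [if_neg hv]; exact gDeg_restrict_of_not_mem hv
    rw [Finset.sum_congr rfl (fun v _ => hd v), ← Finset.sum_filter, Finset.sum_const,
      Set.filter_mem_univ_eq_toFinset, smul_eq_mul, mul_comm, Set.ncard_eq_toFinset_card']
  omega

end Restrict

section Walk

variable (F : SimpleGraph (Fin n))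

lemma exists_two_nbrs (hreg : ∀ v, gDeg F v = 2) (v : Fin n) :
    ∃ a b : Fin n, a ≠ b ∧ {u : Fin n | F.Adj v u} = {a, b} :=
  Set.ncard_eq_two.mp (hreg v)

/-- the two neighbours of a vertex in a 2-regular graph -/
def nbP (hreg : ∀ v, gDeg F v = 2) (v : Fin n) : Fin n × Fin n :=
  ⟨(exists_two_nbrs F hreg v).choose, (exists_two_nbrs F hreg v).choose_spec.choose⟩

lemma nbP_spec (hreg : ∀ v, gDeg F v = 2) (v : Fin n) :
    (nbP F hreg v).1 ≠ (nbP F hreg v).2 ∧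
      {u : Fin n | F.Adj v u} = {(nbP F hreg v).1, (nbP F hreg v).2} :=
  (exists_two_nbrs F hreg v).choose_spec.choose_spec

lemma nbP_adj1 (hreg : ∀ v, gDeg F v = 2) (v : Fin n) : F.Adj v (nbP F hreg v).1 := by
  have h := (nbP_spec F hreg v).2
  have : (nbP F hreg v).1 ∈ {u : Fin n | F.Adj v u} := by rw [h]; exact Set.mem_insert _ _
  exact this

lemma nbP_adj2 (hreg : ∀ v, gDeg F v = 2) (v : Fin n) : F.Adj v (nbP F hreg v).2 := by
  have h := (nbP_spec F hreg v).2
  have : (nbP F hreg v).2 ∈ {u : Fin n | F.Adj v u} := by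
    rw [h]; exact Set.mem_insert_iff.mpr (Or.inr rfl)
  exact this

/-- the neighbour of `cur` other than `prev` -/
def nxt (hreg : ∀ v, gDeg F v = 2) (prev cur : Fin n) : Fin n :=
  if (nbP F hreg cur).1 = prev then (nbP F hreg cur).2 else (nbP F hreg cur).1

lemma nxt_adj (hreg : ∀ v, gDeg F v = 2) (prev cur : Fin n) :
    F.Adj cur (nxt F hreg prev cur) := by
  rw [nxt]; split
  · exact nbP_adj2 F hreg cur
  · exact nbP_adj1 F hreg cur

lemma nxt_ne (hreg : ∀ v, gDeg F v = 2) (prev cur : Fin n) : nxt F hreg prev cur ≠ prev := by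
  rw [nxt]; split
  · rename_i h; rw [← h]; exact ((nbP_spec F hreg cur).1).symm
  · rename_i h; exact h

/-- the forced walk from `v0`, as consecutive pairs -/
def wkP (hreg : ∀ v, gDeg F v = 2) (v0 : Fin n) : ℕ → Fin n × Fin n
  | 0 => (v0, (nbP F hreg v0).1)
  | k + 1 => ((wkP hreg v0 k).2, nxt F hreg (wkP hreg v0 k).1 (wkP hreg v0 k).2)

/-- the forced walk from `v0` -/
def fwk (hreg : ∀ v, gDeg F v = 2) (v0 : Fin n) (k : ℕ) : Fin n := (wkP F hreg v0 k).1

lemma fwk_zero (hreg : ∀ v, gDeg F v = 2) (v0 : Fin n) : fwk F hreg v0 0 = v0 := rfl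

lemma fwk_succ (hreg : ∀ v, gDeg F v = 2) (v0 : Fin n) (k : ℕ) :
    fwk F hreg v0 (k + 1) = (wkP F hreg v0 k).2 := rfl

lemma fwk_adj (hreg : ∀ v, gDeg F v = 2) (v0 : Fin n) (k : ℕ) :
    F.Adj (fwk F hreg v0 k) (fwk F hreg v0 (k + 1)) := by
  rw [fwk_succ]
  induction k with
  | zero => exact nbP_adj1 F hreg v0
  | succ m ih =>
      show F.Adj (wkP F hreg v0 (m + 1)).1 (wkP F hreg v0 (m + 1)).2
      rw [wkP]
      exact nxt_adj F hreg _ _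

lemma fwk_ne2 (hreg : ∀ v, gDeg F v = 2) (v0 : Fin n) (k : ℕ) :
    fwk F hreg v0 (k + 2) ≠ fwk F hreg v0 k := by
  have h1 : fwk F hreg v0 (k + 2) = (wkP F hreg v0 (k + 1)).2 := rfl
  have h2 : (wkP F hreg v0 (k + 1)).2
      = nxt F hreg (wkP F hreg v0 k).1 (wkP F hreg v0 k).2 := by
    rw [wkP]
  rw [h1, h2]
  exact nxt_ne F hreg _ _

lemma fwk_reachable (hreg : ∀ v, gDeg F v = 2) (v0 : Fin n) (k : ℕ) :
    F.Reachable v0 (fwk F hreg v0 k) := by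
  induction k with
  | zero => exact SimpleGraph.Reachable.refl _
  | succ m ih => exact ih.trans (fwk_adj F hreg v0 m).reachable

/-- the full neighbourhood of a vertex with two given distinct neighbours -/
lemma nbhd_eq_pair (hreg : ∀ v, gDeg F v = 2) {v a b : Fin n}
    (ha : F.Adj v a) (hb : F.Adj v b) (hab : a ≠ b) :
    {u : Fin n | F.Adj v u} = {a, b} :=
  pair_eq (hreg v) ha hb hab

/-- key injectivity of the forced walk -/
lemma fwk_injOn (hreg : ∀ v, gDeg F v = 2) (v0 : Fin n) (p : ℕ)
    (hp : p + 1 ≤ compCard F v0) :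
    ∀ i j, i < j → j ≤ p → fwk F hreg v0 i ≠ fwk F hreg v0 j := by
  by_contra hcon
  push_neg at hcon
  obtain ⟨i0, j0, hij0, hj0p, heq0⟩ := hcon
  set f := fwk F hreg v0 with hf
  have hQ : ∃ j, ∃ i, i < j ∧ f i = f j := ⟨j0, i0, hij0, heq0⟩
  classical
  obtain ⟨i, hij, heq⟩ := Nat.find_spec hQ
  set jm := Nat.find hQ with hjm
  have hjmle : jm ≤ j0 := Nat.find_min' hQ ⟨i0, hij0, heq0⟩
  have hinj : ∀ a b, a < b → b < jm → f a ≠ f b := by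
    intro a b hab hbjm habs
    exact Nat.find_min hQ hbjm ⟨a, hab, habs⟩
  have hne1 : ∀ k, f k ≠ f (k + 1) := fun k => (fwk_adj F hreg v0 k).ne
  have hisucc : i + 1 < jm := by
    rcases Nat.lt_or_ge (i+1) jm with h | h
    · exact h
    · exfalso
      have : i + 1 = jm := by omega
      rw [← this] at heq
      exact hne1 i heq
  have hi0 : i = 0 := by
    by_contra hi
    have hi1 : 1 ≤ i := by omega
    have hadj1 : F.Adj (f i) (f (i - 1)) := by
      have := fwk_adj F hreg v0 (i - 1)
      have h' : i - 1 + 1 = i := by omega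
      rw [h'] at this
      exact this.symm
    have hadj2 : F.Adj (f i) (f (i + 1)) := fwk_adj F hreg v0 i
    have hne12 : f (i - 1) ≠ f (i + 1) := by
      have := fwk_ne2 F hreg v0 (i - 1)
      have h' : i - 1 + 2 = i + 1 := by omega
      rw [h'] at this
      exact this.symm
    have hnb : {u : Fin n | F.Adj (f i) u} = {f (i - 1), f (i + 1)} :=
      nbhd_eq_pair F hreg hadj1 hadj2 hne12
    have hadj3 : F.Adj (f i) (f (jm - 1)) := by
      have := fwk_adj F hreg v0 (jm - 1)
      have h' : jm - 1 + 1 = jm := by omega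
      rw [h'] at this
      rw [heq]
      exact this.symm
    have hmem : f (jm - 1) ∈ ({f (i - 1), f (i + 1)} : Set (Fin n)) := by
      rw [← hnb]; exact hadj3
    rcases hmem with h | h
    · have : i - 1 < jm - 1 := by omega
      exact hinj (i - 1) (jm - 1) this (by omega) h.symm
    · rw [Set.mem_singleton_iff] at h
      rcases Nat.lt_or_ge (i + 1) (jm - 1) with hlt | hge
      · exact hinj (i + 1) (jm - 1) hlt (by omega) h.symm
      · have hjm2 : jm = i + 2 := by omega
        rw [hjm2] at heq
        exact fwk_ne2 F hreg v0 i heq.symm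
  subst hi0
  have hjm3 : 3 ≤ jm := by
    have h1 : jm ≠ 1 := by
      intro h; rw [h] at heq; exact hne1 0 heq
    have h2 : jm ≠ 2 := by
      intro h; rw [h] at heq; exact fwk_ne2 F hreg v0 0 heq.symm
    omega
  set S : Set (Fin n) := f '' Set.Iio jm with hS
  have hmemS : ∀ k, k < jm → f k ∈ S := fun k hk => ⟨k, hk, rfl⟩
  have hclosed : ClosedSet F S := by
    rintro u w hadj ⟨m, hm, rfl⟩
    rw [Set.mem_Iio] at hm
    rcases Nat.eq_zero_or_pos m with rfl | hm1
    · have hadjA : F.Adj (f 0) (f 1) := fwk_adj F hreg v0 0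
      have hadjB : F.Adj (f 0) (f (jm - 1)) := by
        have := fwk_adj F hreg v0 (jm - 1)
        have h' : jm - 1 + 1 = jm := by omega
        rw [h'] at this
        rw [heq]
        exact this.symm
      have hneAB : f 1 ≠ f (jm - 1) := hinj 1 (jm - 1) (by omega) (by omega)
      have hnb : {u : Fin n | F.Adj (f 0) u} = {f 1, f (jm - 1)} :=
        nbhd_eq_pair F hreg hadjA hadjB hneAB
      have : w ∈ ({f 1, f (jm - 1)} : Set (Fin n)) := by rw [← hnb]; exact hadj
      rcases this with h | h
      · rw [h]; exact hmemS 1 (by omega)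
      · rw [Set.mem_singleton_iff] at h; rw [h]; exact hmemS (jm - 1) (by omega)
    · have hadjA : F.Adj (f m) (f (m - 1)) := by
        have := fwk_adj F hreg v0 (m - 1)
        have h' : m - 1 + 1 = m := by omega
        rw [h'] at this
        exact this.symm
      have hadjB : F.Adj (f m) (f (m + 1)) := fwk_adj F hreg v0 m
      have hneAB : f (m - 1) ≠ f (m + 1) := by
        have := fwk_ne2 F hreg v0 (m - 1)
        have h' : m - 1 + 2 = m + 1 := by omega
        rw [h'] at this
        exact this.symm
      have hnb : {u : Fin n | F.Adj (f m) u} = {f (m - 1), f (m + 1)} :=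
        nbhd_eq_pair F hreg hadjA hadjB hneAB
      have : w ∈ ({f (m - 1), f (m + 1)} : Set (Fin n)) := by rw [← hnb]; exact hadj
      rcases this with h | h
      · rw [h]; exact hmemS (m - 1) (by omega)
      · rw [Set.mem_singleton_iff] at h
        rcases Nat.lt_or_ge (m + 1) jm with hlt | hge
        · rw [h]; exact hmemS (m + 1) hlt
        · have : m + 1 = jm := by omega
          rw [h, this, ← heq]
          exact hmemS 0 (by omega)
  have hcomp : {u : Fin n | F.Reachable v0 u} ⊆ S := by
    intro u hu
    exact reach_subset_of_closed hclosed (hmemS 0 (by omega)) hu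
  have hcard : compCard F v0 ≤ jm := by
    have h1 : compCard F v0 ≤ S.ncard := Set.ncard_le_ncard hcomp (Set.toFinite _)
    have h2 : S.ncard ≤ (Set.Iio jm).ncard := Set.ncard_image_le (Set.toFinite _)
    have h3 : (Set.Iio jm : Set ℕ) = ↑(Finset.range jm) := by
      ext x; simp [Finset.mem_range]
    have h4 : (Set.Iio jm : Set ℕ).ncard = jm := by
      rw [h3, Set.ncard_coe_finset, Finset.card_range]
    omega
  omega

end Walk

section Path

/-- the path graph on `f 0, f 1, ..., f p` -/
def pathG (f : ℕ → Fin n) (p : ℕ) : SimpleGraph (Fin n) where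
  Adj u w := u ≠ w ∧ ∃ i, i < p ∧ ((u = f i ∧ w = f (i + 1)) ∨ (w = f i ∧ u = f (i + 1)))
  symm := by
    constructor
    rintro u w ⟨h, i, hi, hc⟩
    refine ⟨h.symm, i, hi, ?_⟩
    tauto
  loopless := ⟨fun u h => h.1 rfl⟩

/-- `f` is injective on `{0, ..., p}` -/
def InjUpTo (f : ℕ → Fin n) (p : ℕ) : Prop := ∀ i j, i ≤ p → j ≤ p → f i = f j → i = j

variable {f : ℕ → Fin n} {p : ℕ}

lemma pathG_adj {u w : Fin n} :
    (pathG f p).Adj u w ↔ u ≠ w ∧ ∃ i, i < p ∧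
      ((u = f i ∧ w = f (i + 1)) ∨ (w = f i ∧ u = f (i + 1))) := Iff.rfl

lemma pathG_adj_succ (hinj : InjUpTo f p) {k : ℕ} (hk : k < p) :
    (pathG f p).Adj (f k) (f (k + 1)) :=
  ⟨fun h => by have := hinj k (k + 1) (by omega) (by omega) h; omega,
    ⟨k, hk, Or.inl ⟨rfl, rfl⟩⟩⟩

lemma pathG_supp {u w : Fin n} (h : (pathG f p).Adj u w) : u ∈ f '' Set.Iic p := by
  obtain ⟨-, i, hi, hc⟩ := h
  rcases hc with ⟨rfl, -⟩ | ⟨-, rfl⟩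
  · exact ⟨i, by simp only [Set.mem_Iic]; omega, rfl⟩
  · exact ⟨i + 1, by simp only [Set.mem_Iic]; omega, rfl⟩

lemma pathG_nbhd_zero (hinj : InjUpTo f p) (hp : 1 ≤ p) :
    {u : Fin n | (pathG f p).Adj (f 0) u} = {f 1} := by
  ext u
  simp only [Set.mem_setOf_eq, pathG_adj, Set.mem_singleton_iff]
  constructor
  · rintro ⟨hne, i, hi, ⟨h1, rfl⟩ | ⟨rfl, h2⟩⟩
    · have : i = 0 := (hinj i 0 (by omega) (by omega) h1.symm)
      rw [this]
    · exact absurd (hinj 0 (i + 1) (by omega) (by omega) h2) (by omega)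
  · rintro rfl
    exact pathG_adj_succ hinj hp

lemma pathG_nbhd_last (hinj : InjUpTo f p) (hp : 1 ≤ p) :
    {u : Fin n | (pathG f p).Adj (f p) u} = {f (p - 1)} := by
  ext u
  simp only [Set.mem_setOf_eq, pathG_adj, Set.mem_singleton_iff]
  constructor
  · rintro ⟨hne, i, hi, ⟨h1, rfl⟩ | ⟨rfl, h2⟩⟩
    · exact absurd (hinj p i (by omega) (by omega) h1) (by omega)
    · have : p = i + 1 := hinj p (i + 1) (by omega) (by omega) h2
      have hi' : i = p - 1 := by omega
      rw [hi']
  · rintro rfl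
    have h := pathG_adj_succ hinj (show p - 1 < p by omega)
    have h' : p - 1 + 1 = p := by omega
    rw [h'] at h
    exact h.symm

lemma pathG_nbhd_mid (hinj : InjUpTo f p) {m : ℕ} (h0 : 0 < m) (hm : m < p) :
    {u : Fin n | (pathG f p).Adj (f m) u} = {f (m - 1), f (m + 1)} := by
  ext u
  simp only [Set.mem_setOf_eq, pathG_adj, Set.mem_insert_iff, Set.mem_singleton_iff]
  constructor
  · rintro ⟨hne, i, hi, ⟨h1, rfl⟩ | ⟨rfl, h2⟩⟩
    · have : m = i := hinj m i (by omega) (by omega) h1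
      subst this
      right; rfl
    · have : m = i + 1 := hinj m (i + 1) (by omega) (by omega) h2
      left; rw [show i = m - 1 by omega]
  · rintro (rfl | rfl)
    · have h := pathG_adj_succ hinj (show m - 1 < p by omega)
      have h' : m - 1 + 1 = m := by omega
      rw [h'] at h
      exact h.symm
    · exact pathG_adj_succ hinj hm

lemma pathG_nbhd_not_mem (hv : v ∉ f '' Set.Iic p) :
    {u : Fin n | (pathG f p).Adj v u} = ∅ := by
  ext u
  simp only [Set.mem_setOf_eq, Set.mem_empty_iff_false, iff_false]
  intro h
  exact hv (pathG_supp h)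

lemma pathG_edgeSet (hinj : InjUpTo f p) :
    (pathG f p).edgeSet = (fun i => s(f i, f (i + 1))) '' Set.Iio p := by
  ext e
  refine Sym2.ind (fun a b => ?_) e
  rw [SimpleGraph.mem_edgeSet]
  constructor
  · rintro ⟨hne, i, hi, ⟨rfl, rfl⟩ | ⟨rfl, rfl⟩⟩
    · exact ⟨i, hi, rfl⟩
    · exact ⟨i, hi, Sym2.eq_swap⟩
  · rintro ⟨i, hi, hei⟩
    rw [Set.mem_Iio] at hi
    have : s(f i, f (i + 1)) = s(a, b) := hei
    rw [← SimpleGraph.mem_edgeSet, ← this, SimpleGraph.mem_edgeSet]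
    exact pathG_adj_succ hinj hi

lemma ncard_Iio (p : ℕ) : (Set.Iio p).ncard = p := by
  have h3 : (Set.Iio p : Set ℕ) = ↑(Finset.range p) := by
    ext x; simp [Finset.mem_range]
  rw [h3, Set.ncard_coe_finset, Finset.card_range]

lemma ncard_Iic (p : ℕ) : (Set.Iic p).ncard = p + 1 := by
  have h3 : (Set.Iic p : Set ℕ) = ↑(Finset.range (p + 1)) := by
    ext x; simp [Finset.mem_range]
  rw [h3, Set.ncard_coe_finset, Finset.card_range]

lemma pathG_edge_ncard (hinj : InjUpTo f p) : (pathG f p).edgeSet.ncard = p := by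
  rw [pathG_edgeSet hinj]
  rw [Set.ncard_image_of_injOn, ncard_Iio]
  intro i hi j hj hij
  rw [Set.mem_Iio] at hi hj
  rw [Sym2.eq_iff] at hij
  rcases hij with ⟨h1, -⟩ | ⟨h1, h2⟩
  · exact hinj i j (by omega) (by omega) h1
  · have := hinj i (j + 1) (by omega) (by omega) h1
    have := hinj (i + 1) j (by omega) (by omega) h2
    omega

lemma pathG_reachable (hinj : InjUpTo f p) {k : ℕ} (hk : k ≤ p) :
    (pathG f p).Reachable (f 0) (f k) := by
  induction k with
  | zero => exact SimpleGraph.Reachable.refl _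
  | succ m ih =>
      exact (ih (by omega)).trans (pathG_adj_succ hinj (by omega)).reachable

lemma pathG_reachable' (hinj : InjUpTo f p) {j k : ℕ} (hj : j ≤ p) (hk : k ≤ p) :
    (pathG f p).Reachable (f j) (f k) :=
  (pathG_reachable hinj hj).symm.trans (pathG_reachable hinj hk)

end Path

section Agree

lemma gDeg_eq_of_agree {F1 G : SimpleGraph (Fin n)} {B : Set (Fin n)}
    (hagr : ∀ u w, u ∈ B → (F1.Adj u w ↔ G.Adj u w)) {v : Fin n} (hv : v ∈ B) :
    gDeg F1 v = gDeg G v := by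
  unfold gDeg
  congr 1
  ext u
  exact hagr v u hv

lemma compEdges_eq_of_agree {F1 G : SimpleGraph (Fin n)} {B : Set (Fin n)}
    (hsupp : ∀ u w, G.Adj u w → u ∈ B)
    (hagr : ∀ u w, u ∈ B → (F1.Adj u w ↔ G.Adj u w))
    {v : Fin n} (hv : v ∈ B) (hreach : ∀ u ∈ B, G.Reachable v u) :
    compEdges F1 v = G.edgeSet.ncard := by
  have hB : ClosedSet G B := fun u w h _ => hsupp w u h.symm
  have hRset : {u : Fin n | F1.Reachable v u} = {u : Fin n | G.Reachable v u} :=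
    reachSet_eq_of_agree hB hagr hv
  have hset : {e ∈ F1.edgeSet | ∃ u, u ∈ e ∧ F1.Reachable v u} = G.edgeSet := by
    ext e
    refine Sym2.ind (fun a b => ?_) e
    simp only [Set.mem_setOf_eq, SimpleGraph.mem_edgeSet]
    constructor
    · rintro ⟨hadj, u, hue, hru⟩
      have hgu : G.Reachable v u := by
        have h' : u ∈ {u : Fin n | F1.Reachable v u} := hru
        rw [hRset] at h'
        exact h' 
      have huB : u ∈ B := reach_subset_of_closed hB hv hgu
      rw [Sym2.mem_iff] at hue
      rcases hue with rfl | rfl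
      · exact (hagr u b huB).mp hadj
      · exact ((hagr u a huB).mp hadj.symm).symm
    · intro hadj
      have haB : a ∈ B := hsupp a b hadj
      refine ⟨(hagr a b haB).mpr hadj, a, Sym2.mem_mk_left a b, ?_⟩
      have : a ∈ {u : Fin n | G.Reachable v u} := hreach a haB
      rw [← hRset] at this
      exact this
  rw [compEdges, hset]

end Agree

section Components

open SimpleGraph

lemma supp_closed (F : SimpleGraph (Fin n)) (c : F.ConnectedComponent) :
    ClosedSet F c.supp := by
  intro u w h hu
  rw [ConnectedComponent.mem_supp_iff] at hu ⊢
  rw [← hu]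
  exact (ConnectedComponent.eq).mpr h.symm.reachable

lemma reachSet_eq_supp (F : SimpleGraph (Fin n)) (v : Fin n) :
    {u : Fin n | F.Reachable v u} = (F.connectedComponentMk v).supp := by
  ext u
  rw [ConnectedComponent.mem_supp_iff, Set.mem_setOf_eq]
  rw [ConnectedComponent.eq]
  exact ⟨fun h => h.symm, fun h => h.symm⟩

lemma compCard_eq_supp (F : SimpleGraph (Fin n)) (v : Fin n) :
    compCard F v = (F.connectedComponentMk v).supp.ncard := by
  rw [compCard, reachSet_eq_supp]

lemma supp_disjoint (F : SimpleGraph (Fin n)) {c d : F.ConnectedComponent} (h : c ≠ d) :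
    Disjoint c.supp d.supp := by
  rw [Set.disjoint_left]
  intro u hu hd
  rw [ConnectedComponent.mem_supp_iff] at hu hd
  exact h (hu ▸ hd ▸ rfl)

/-- the union of the supports of a finite set of components -/
def US (F : SimpleGraph (Fin n)) (T : Finset F.ConnectedComponent) : Set (Fin n) :=
  ⋃ c ∈ T, c.supp

lemma mem_US {F : SimpleGraph (Fin n)} {T : Finset F.ConnectedComponent} {u : Fin n} :
    u ∈ US F T ↔ ∃ c ∈ T, u ∈ c.supp := by
  simp [US]

lemma US_closed (F : SimpleGraph (Fin n)) (T : Finset F.ConnectedComponent) :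
    ClosedSet F (US F T) := by
  intro u w h hu
  rw [mem_US] at hu ⊢
  obtain ⟨c, hc, hu⟩ := hu
  exact ⟨c, hc, supp_closed F c h hu⟩

lemma US_ncard (F : SimpleGraph (Fin n)) (T : Finset F.ConnectedComponent) :
    (US F T).ncard = ∑ c ∈ T, c.supp.ncard := by
  classical
  induction T using Finset.induction_on with
  | empty => simp [US]
  | @insert c T hc ih =>
      have hU : US F (insert c T) = c.supp ∪ US F T := by
        rw [US, Finset.set_biUnion_insert, US]
      have hdisj : Disjoint c.supp (US F T) := by
        rw [Set.disjoint_left]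
        intro u hu hmem
        rw [mem_US] at hmem
        obtain ⟨d, hd, hud⟩ := hmem
        have hcd : c ≠ d := fun h => hc (h ▸ hd)
        exact (Set.disjoint_left.mp (supp_disjoint F hcd)) hu hud
      rw [hU, Set.ncard_union_eq hdisj (Set.toFinite _) (Set.toFinite _), ih,
        Finset.sum_insert hc]

end Components

section Master

lemma compEdges_eq_reach_ncard {F F1 : SimpleGraph (Fin n)} (hreg : ∀ v, gDeg F v = 2)
    {A : Set (Fin n)} (hAcl : ClosedSet F A)
    (hagr : ∀ u w, u ∈ A → (F1.Adj u w ↔ F.Adj u w)) {v : Fin n} (hv : v ∈ A) :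
    compEdges F1 v = {u : Fin n | F.Reachable v u}.ncard := by
  set C := {u : Fin n | F.Reachable v u} with hC
  have hCcl : ClosedSet F C := by
    intro u w h hu
    exact SimpleGraph.Reachable.trans hu h.reachable
  have hCsubA : C ⊆ A := fun u hu => reach_subset_of_closed hAcl hv hu
  have hagrF : ∀ u w, u ∈ C → ((restrictG F C).Adj u w ↔ F.Adj u w) := by
    intro u w hu
    rw [restrictG_adj]
    exact ⟨fun h => h.1, fun h => ⟨h, hu, hCcl h hu⟩⟩
  have hagrC : ∀ u w, u ∈ C → (F1.Adj u w ↔ (restrictG F C).Adj u w) := by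
    intro u w hu
    rw [hagr u w (hCsubA hu), hagrF u w hu]
  have hsupp : ∀ u w, (restrictG F C).Adj u w → u ∈ C := fun u w h => h.2.1
  have hvC : v ∈ C := SimpleGraph.Reachable.refl v
  have hreach : ∀ u ∈ C, (restrictG F C).Reachable v u := by
    intro u hu
    exact reachable_of_agree hCcl hagrF hvC hu
  rw [compEdges_eq_of_agree hsupp hagrC hvC hreach, restrictG_edge_ncard hreg hCcl]

end Master

end LongSub

open LongSub

/-- Any two-factor `F` with at least `n/2` vertices on cycles of length at least `K`
contains a subgraph `F¹` with `n/2 ≤ e(F¹) ≤ n/2 + 2K` whose components are cycles of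
length at least `K` and at most one path of length at least `K`.  (Here `F¹ ≤ F` with
`∀ v, deg v ≤ 2` forces all components to be paths or cycles; the number of vertices of
degree one being `0` or `2` says there is at most one nontrivial path component; and
every nontrivial component having at least `K` edges says each cycle, resp. the path,
has length at least `K`.) -/
theorem choose_long_subfactor (K n : ℕ) (hK : 3 ≤ K) (F : SimpleGraph (Fin n))
    (hreg : ∀ v, gDeg F v = 2)
    (hlong : (n : ℝ) / 2 ≤ ({v : Fin n | K ≤ compCard F v}.ncard : ℝ)) :
    ∃ F1 : SimpleGraph (Fin n), F1 ≤ F ∧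
      (n : ℝ) / 2 ≤ (F1.edgeSet.ncard : ℝ) ∧
      (F1.edgeSet.ncard : ℝ) ≤ (n : ℝ) / 2 + 2 * K ∧
      ({v : Fin n | gDeg F1 v = 1}.ncard = 0 ∨ {v : Fin n | gDeg F1 v = 1}.ncard = 2) ∧
      (∀ v : Fin n, 0 < gDeg F1 v → K ≤ compEdges F1 v) := by
  classical
  haveI : Fintype F.ConnectedComponent := Fintype.ofFinite _
  set L : Finset F.ConnectedComponent :=
    Finset.univ.filter (fun c => K ≤ c.supp.ncard) with hL
  set m0 : ℕ := (n + 1) / 2 with hm0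
  have hXU : {v : Fin n | K ≤ compCard F v} = US F L := by
    ext v
    rw [Set.mem_setOf_eq, mem_US]
    constructor
    · intro h
      refine ⟨F.connectedComponentMk v, ?_, ?_⟩
      · rw [hL, Finset.mem_filter]
        exact ⟨Finset.mem_univ _, by rwa [← compCard_eq_supp]⟩
      · rw [SimpleGraph.ConnectedComponent.mem_supp_iff]
    · rintro ⟨c, hcL, hvc⟩
      rw [SimpleGraph.ConnectedComponent.mem_supp_iff] at hvc
      rw [compCard_eq_supp, hvc]
      rw [hL, Finset.mem_filter] at hcL
      exact hcL.2
  have hlongN : m0 ≤ ∑ c ∈ L, c.supp.ncard := by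
    rw [div_le_iff₀ (by norm_num : (0:ℝ) < 2)] at hlong
    have hn : n ≤ {v : Fin n | K ≤ compCard F v}.ncard * 2 := by exact_mod_cast hlong
    rw [hXU, US_ncard] at hn
    omega
  -- choose a subset of long components of minimal total size at least m0
  have hcand : (L.powerset.filter (fun S => m0 ≤ ∑ c ∈ S, c.supp.ncard)).Nonempty :=
    ⟨L, Finset.mem_filter.mpr ⟨Finset.mem_powerset_self L, hlongN⟩⟩
  obtain ⟨S, hSmem, hSmin⟩ :=
    Finset.exists_min_image _ (fun S => ∑ c ∈ S, c.supp.ncard) hcand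
  rw [Finset.mem_filter, Finset.mem_powerset] at hSmem
  obtain ⟨hSsub, hSsum⟩ := hSmem
  -- a helper: vertices in the union of components from a subset of L have long components
  have hlongcomp : ∀ (T : Finset F.ConnectedComponent), T ⊆ L → ∀ v ∈ US F T,
      K ≤ {u : Fin n | F.Reachable v u}.ncard := by
    intro T hT v hv
    rw [mem_US] at hv
    obtain ⟨c, hcT, hvc⟩ := hv
    rw [SimpleGraph.ConnectedComponent.mem_supp_iff] at hvc
    rw [reachSet_eq_supp, hvc]
    have := hT hcT
    rw [hL, Finset.mem_filter] at this
    exact this.2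
  -- cast helper for the final numeric goals
  have hcast : ∀ E : ℕ, n ≤ 2 * E → 2 * E ≤ n + 4 * K →
      (n : ℝ) / 2 ≤ (E : ℝ) ∧ (E : ℝ) ≤ (n : ℝ) / 2 + 2 * K := by
    intro E h1 h2
    constructor
    · rw [div_le_iff₀ (by norm_num : (0:ℝ) < 2)]
      exact_mod_cast (by omega : n ≤ E * 2)
    · have h2' : (2 : ℝ) * E ≤ n + 4 * K := by exact_mod_cast h2
      linarith
  by_cases hcase : 2 * (∑ c ∈ S, c.supp.ncard) ≤ n + 4 * K
  · -- Case 1: take the full union of the components in S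
    set A : Set (Fin n) := US F S with hA
    have hAcl : ClosedSet F A := US_closed F S
    refine ⟨restrictG F A, restrictG_le F A, ?_⟩
    have hagr : ∀ u w, u ∈ A → ((restrictG F A).Adj u w ↔ F.Adj u w) := by
      intro u w hu
      rw [restrictG_adj]
      exact ⟨fun h => h.1, fun h => ⟨h, hu, hAcl h hu⟩⟩
    have hedge : (restrictG F A).edgeSet.ncard = ∑ c ∈ S, c.supp.ncard := by
      rw [restrictG_edge_ncard hreg hAcl, hA, US_ncard]
    have hdeg : ∀ v : Fin n, gDeg (restrictG F A) v = 2 ∨ gDeg (restrictG F A) v = 0 := by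
      intro v
      by_cases hv : v ∈ A
      · exact Or.inl (gDeg_restrict_of_mem hreg hAcl hv)
      · exact Or.inr (gDeg_restrict_of_not_mem hv)
    obtain ⟨hc1, hc2⟩ := hcast ((restrictG F A).edgeSet.ncard)
      (by rw [hedge]; omega) (by rw [hedge]; exact hcase)
    refine ⟨hc1, hc2, Or.inl ?_, ?_⟩
    · have hempty : {v : Fin n | gDeg (restrictG F A) v = 1} = ∅ := by
        ext v
        simp only [Set.mem_setOf_eq, Set.mem_empty_iff_false, iff_false]
        intro h
        rcases hdeg v with h' | h' <;> omega
      rw [hempty, Set.ncard_empty]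
    · intro v hv
      have hvA : v ∈ A := by
        by_contra hvA
        rw [gDeg_restrict_of_not_mem hvA] at hv
        omega
      rw [compEdges_eq_reach_ncard hreg hAcl hagr hvA]
      exact hlongcomp S hSsub v hvA
  · -- Case 2: components of S minus one, plus a path in the remaining one
    push_neg at hcase
    have hSne : S.Nonempty := by
      rcases Finset.eq_empty_or_nonempty S with rfl | h
      · exfalso; rw [Finset.sum_empty] at hcase; omega
      · exact h
    obtain ⟨c, hcS⟩ := hSne
    set Se : Finset F.ConnectedComponent := S.erase c with hSe
    have hsplit : c.supp.ncard + ∑ d ∈ Se, d.supp.ncard = ∑ d ∈ S, d.supp.ncard := by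
      rw [hSe]
      exact Finset.add_sum_erase S (fun d => d.supp.ncard) hcS
    have hKc : K ≤ c.supp.ncard := by
      have := hSsub hcS
      rw [hL, Finset.mem_filter] at this
      exact this.2
    -- minimality: the sum over Se is less than m0
    have hSelt : ∑ d ∈ Se, d.supp.ncard < m0 := by
      by_contra h
      push_neg at h
      have hmem : Se ∈ L.powerset.filter (fun S => m0 ≤ ∑ c ∈ S, c.supp.ncard) := by
        rw [Finset.mem_filter, Finset.mem_powerset]
        exact ⟨(Finset.erase_subset _ _).trans hSsub, h⟩
      have := hSmin _ hmem
      omega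
    -- pick a base vertex in c
    have hcne : c.supp.Nonempty := by
      apply Set.nonempty_of_ncard_ne_zero
      omega
    obtain ⟨v0, hv0⟩ := hcne
    have hmkv0 : F.connectedComponentMk v0 = c :=
      (SimpleGraph.ConnectedComponent.mem_supp_iff _ _).mp hv0
    have hcompv0 : compCard F v0 = c.supp.ncard := by
      rw [compCard_eq_supp, hmkv0]
    -- the length of the path
    set a : ℕ := ∑ d ∈ Se, d.supp.ncard with ha
    set p : ℕ := max K (m0 - a) with hp
    have hpK : K ≤ p := le_max_left _ _
    have hpm : m0 - a ≤ p := le_max_right _ _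
    have hpor : p = K ∨ p = m0 - a := by
      rcases max_choice K (m0 - a) with h | h <;> [left; right] <;> rw [hp, h]
    have hnum : p + 1 ≤ c.supp.ncard ∧ n ≤ 2 * (a + p) ∧ 2 * (a + p) ≤ n + 4 * K := by
      have h2m0 : n ≤ 2 * m0 ∧ 2 * m0 ≤ n + 1 := by omega
      omega
    obtain ⟨hple, hlow, hhigh⟩ := hnum
    have hpcomp : p + 1 ≤ compCard F v0 := by omega
    -- the path
    set f : ℕ → Fin n := fwk F hreg v0 with hf
    have hinjf : InjUpTo f p := by
      intro i j hi hj hij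
      by_contra hne
      rcases Nat.lt_or_ge i j with h | h
      · exact fwk_injOn F hreg v0 p hpcomp i j h hj hij
      · exact fwk_injOn F hreg v0 p hpcomp j i (by omega) hi hij.symm
    set ps : Set (Fin n) := f '' Set.Iic p with hps
    have hpsc : ps ⊆ c.supp := by
      rintro u ⟨k, hk, rfl⟩
      have hr : F.Reachable v0 (f k) := fwk_reachable F hreg v0 k
      have : f k ∈ {u : Fin n | F.Reachable v0 u} := hr
      rw [reachSet_eq_supp, hmkv0] at this
      exact this
    set A : Set (Fin n) := US F Se with hA
    have hAcl : ClosedSet F A := US_closed F Se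
    have hdisj : ∀ u ∈ ps, u ∉ A := by
      intro u hu hA'
      rw [mem_US] at hA'
      obtain ⟨d, hdSe, hud⟩ := hA'
      have hdc : d ≠ c := Finset.ne_of_mem_erase hdSe
      exact Set.disjoint_left.mp (supp_disjoint F hdc) hud (hpsc hu)
    set P : SimpleGraph (Fin n) := pathG f p with hP
    have hPle : P ≤ F := by
      rintro u w ⟨hne, i, hi, hcc⟩
      rcases hcc with ⟨rfl, rfl⟩ | ⟨rfl, rfl⟩
      · exact fwk_adj F hreg v0 i
      · exact (fwk_adj F hreg v0 i).symm
    set F1 : SimpleGraph (Fin n) := restrictG F A ⊔ P with hF1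
    have hsupP : ∀ u w, P.Adj u w → u ∈ ps := fun u w h => pathG_supp h
    have hagrA : ∀ u w, u ∈ A → (F1.Adj u w ↔ F.Adj u w) := by
      intro u w hu
      rw [hF1, SimpleGraph.sup_adj]
      constructor
      · rintro (h | h)
        · exact h.1
        · exact absurd hu (by have := hsupP u w h; exact fun h' => hdisj u this h')
      · intro h
        exact Or.inl ⟨h, hu, hAcl h hu⟩
    have hagrP : ∀ u w, u ∈ ps → (F1.Adj u w ↔ P.Adj u w) := by
      intro u w hu
      rw [hF1, SimpleGraph.sup_adj]
      constructor
      · rintro (h | h)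
        · exact absurd h.2.1 (hdisj u hu)
        · exact h
      · exact Or.inr
    have hzero : ∀ v : Fin n, v ∉ A → v ∉ ps → gDeg F1 v = 0 := by
      intro v hvA hvps
      rw [gDeg]
      convert Set.ncard_empty (Fin n)
      ext u
      simp only [Set.mem_setOf_eq, Set.mem_empty_iff_false, iff_false]
      intro h
      rw [hF1, SimpleGraph.sup_adj] at h
      rcases h with h | h
      · exact hvA h.2.1
      · exact hvps (hsupP _ _ h)
    -- edge count
    have hedisj : Disjoint (restrictG F A).edgeSet P.edgeSet := by
      rw [Set.disjoint_left]
      intro e he1 he2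
      induction e using Sym2.ind with
      | _ x y =>
        rw [SimpleGraph.mem_edgeSet] at he1 he2
        exact hdisj x (hsupP _ _ he2) he1.2.1
    have hedge : F1.edgeSet.ncard = a + p := by
      rw [hF1, SimpleGraph.edgeSet_sup,
        Set.ncard_union_eq hedisj (Set.toFinite _) (Set.toFinite _),
        restrictG_edge_ncard hreg hAcl, pathG_edge_ncard hinjf, hA, US_ncard, ha]
    obtain ⟨hc1, hc2⟩ := hcast (F1.edgeSet.ncard)
      (by rw [hedge]; exact hlow) (by rw [hedge]; exact hhigh)
    refine ⟨F1, ?_, hc1, hc2, ?_, ?_⟩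
    · rw [hF1]
      exact sup_le (restrictG_le F A) hPle
    · -- degree-one vertices: exactly the two endpoints of the path
      right
      have hset : {v : Fin n | gDeg F1 v = 1} = {f 0, f p} := by
        ext v
        simp only [Set.mem_setOf_eq, Set.mem_insert_iff, Set.mem_singleton_iff]
        by_cases hvA : v ∈ A
        · have h2 : gDeg F1 v = 2 := by
            rw [gDeg_eq_of_agree hagrA hvA]; exact hreg v
          constructor
          · intro h; omega
          · rintro (rfl | rfl)
            · exact absurd hvA (hdisj _ ⟨0, by simp, rfl⟩)
            · exact absurd hvA (hdisj _ ⟨p, by simp, rfl⟩)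
        · by_cases hvps : v ∈ ps
          · obtain ⟨i, hi, rfl⟩ := hvps
            rw [Set.mem_Iic] at hi
            have hdegP : gDeg F1 (f i) = gDeg P (f i) :=
              gDeg_eq_of_agree hagrP ⟨i, hi, rfl⟩
            rcases Nat.eq_zero_or_pos i with rfl | hi0
            · have h1 : gDeg F1 (f 0) = 1 := by
                rw [hdegP, gDeg, hP, pathG_nbhd_zero hinjf (by omega), Set.ncard_singleton]
              exact ⟨fun _ => Or.inl rfl, fun _ => h1⟩
            · rcases Nat.lt_or_ge i p with hip | hip
              · have h2 : gDeg P (f i) = 2 := by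
                  rw [gDeg, hP, pathG_nbhd_mid hinjf hi0 hip]
                  exact Set.ncard_pair (by
                    intro h
                    have := hinjf (i - 1) (i + 1) (by omega) (by omega) h
                    omega)
                constructor
                · intro h; omega
                · rintro (h | h)
                  · exact absurd (hinjf i 0 hi (by omega) h) (by omega)
                  · exact absurd (hinjf i p hi (by omega) h) (by omega)
              · have hip' : i = p := by omega
                subst hip'
                have h1 : gDeg F1 (f p) = 1 := by
                  rw [hdegP, gDeg, hP, pathG_nbhd_last hinjf (by omega), Set.ncard_singleton]
                exact ⟨fun _ => Or.inr rfl, fun _ => h1⟩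
          · rw [hzero v hvA hvps]
            constructor
            · intro h; omega
            · rintro (rfl | rfl)
              · exact absurd ⟨0, by simp, rfl⟩ hvps
              · exact absurd ⟨p, by simp, rfl⟩ hvps
      rw [hset]
      exact Set.ncard_pair (by
        intro h
        have := hinjf 0 p (by omega) (by omega) h
        omega)
    · -- each nontrivial component has at least K edges
      intro v hv
      by_cases hvA : v ∈ A
      · rw [compEdges_eq_reach_ncard hreg hAcl hagrA hvA]
        exact hlongcomp Se ((Finset.erase_subset _ _).trans hSsub) v hvA
      · by_cases hvps : v ∈ ps
        · obtain ⟨i, hi, rfl⟩ := hvps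
          rw [Set.mem_Iic] at hi
          have hreach : ∀ u ∈ ps, P.Reachable (f i) u := by
            rintro u ⟨k, hk, rfl⟩
            rw [Set.mem_Iic] at hk
            exact pathG_reachable' hinjf hi hk
          rw [compEdges_eq_of_agree hsupP hagrP ⟨i, hi, rfl⟩ hreach,
            pathG_edge_ncard hinjf]
          omega
        · rw [hzero v hvA hvps] at hv
          omega
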